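/- arXiv:2012.05514 — 2 statements merged into one kernel-verified Lean document; each statement's English description precedes it below -/
import Mathlib

section
/- Let λ > 0, let B ∈ ℝ^{n×k}, U ∈ ℝ^{n×m}, and R ∈ ℝ^{m×m} symmetric positive definite satisfy B Bᵀ = λ U R⁻¹ Uᵀ. Let ψ : ℝ^n → ℝ be C² and positive, and set J = -λ log ψ. Then -(1/2)(∂ₓJ)ᵀ U R⁻¹ Uᵀ (∂ₓJ) + (1/2) Tr(B Bᵀ ∂ₓ² J) = -(λ/(2ψ)) Tr(B Bᵀ ∂ₓ² ψ), i.e., the terms quadratic in ∂ₓψ cancel exactly. -/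
open Matrix

/-- Under Kappen's compatibility condition `B Bᵀ = λ U R⁻¹ Uᵀ`, the terms quadratic in
`∂ₓψ` cancel:
`-(1/2)(∂ₓJ)ᵀ U R⁻¹ Uᵀ (∂ₓJ) + (1/2) Tr(B Bᵀ ∂ₓ²J) = -(λ/(2ψ)) Tr(B Bᵀ ∂ₓ²ψ)`. -/
theorem quadratic_terms_cancel {n m k : ℕ} (lam : ℝ) (hlam : 0 < lam)
    (B : Matrix (Fin n) (Fin k) ℝ) (U : Matrix (Fin n) (Fin m) ℝ)
    (R : Matrix (Fin m) (Fin m) ℝ) (hR : R.PosDef)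
    (hBU : B * B.transpose = lam • (U * R⁻¹ * U.transpose))
    (ψ : (Fin n → ℝ) → ℝ) (hψ : ContDiff ℝ 2 ψ) (hpos : ∀ x, 0 < ψ x)
    (J : (Fin n → ℝ) → ℝ) (hJ : J = fun x => -lam * Real.log (ψ x))
    (x : Fin n → ℝ)
    (gradJ gradψ : Fin n → ℝ)
    (hgJ : gradJ = fun i => fderiv ℝ J x (Pi.single i 1))
    (hgψ : gradψ = fun i => fderiv ℝ ψ x (Pi.single i 1))
    (hessJ hessψ : Matrix (Fin n) (Fin n) ℝ)
    (hhJ : hessJ = fun i j => fderiv ℝ (fun y => fderiv ℝ J y (Pi.single j 1)) x (Pi.single i 1))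
    (hhψ : hessψ = fun i j => fderiv ℝ (fun y => fderiv ℝ ψ y (Pi.single j 1)) x (Pi.single i 1)) :
    -(1/2) * (gradJ ⬝ᵥ (U * R⁻¹ * U.transpose).mulVec gradJ)
      + (1/2) * Matrix.trace (B * B.transpose * hessJ)
    = -(lam / (2 * ψ x)) * Matrix.trace (B * B.transpose * hessψ) := by
  have hψd : Differentiable ℝ ψ := hψ.differentiable (by norm_num)
  have hne : ∀ y, ψ y ≠ 0 := fun y => (hpos y).ne'
  -- first derivative of J
  have hJfd : ∀ y, HasFDerivAt J ((-lam * (ψ y)⁻¹) • fderiv ℝ ψ y) y := by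
    intro y
    have h1 : HasFDerivAt (fun z => Real.log (ψ z)) ((ψ y)⁻¹ • fderiv ℝ ψ y) y :=
      (hψd y).hasFDerivAt.log (hne y)
    have h2 := h1.const_mul (-lam)
    rw [hJ]
    rw [← smul_smul]
    exact h2
  set c : ℝ := -lam * (ψ x)⁻¹ with hc
  set d : ℝ := lam * ((ψ x) ^ 2)⁻¹ with hd
  have hgJ' : gradJ = fun i => c * gradψ i := by
    funext i
    rw [hgJ, hgψ, (hJfd x).fderiv]
    simp [hc]
  -- g j is C¹
  have hg1 : ∀ j, ContDiff ℝ 1 (fun y => fderiv ℝ ψ y (Pi.single j 1)) := fun j =>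
    (hψ.fderiv_right (by norm_num)).clm_apply contDiff_const
  -- second derivative of J
  have hhJ' : hessJ = fun i j => c * hessψ i j + d * (gradψ j * gradψ i) := by
    funext i j
    have hFeq : (fun y => fderiv ℝ J y (Pi.single j 1))
        = fun y => (-lam * (ψ y)⁻¹) * fderiv ℝ ψ y (Pi.single j 1) := by
      funext y; rw [(hJfd y).fderiv]; simp
    have hu : HasFDerivAt (fun y => -lam * (ψ y)⁻¹)
        ((-lam) • ((-((ψ x) ^ 2)⁻¹) • fderiv ℝ ψ x)) x := by
      have hinv : HasFDerivAt (fun y => (ψ y)⁻¹) ((-((ψ x) ^ 2)⁻¹) • fderiv ℝ ψ x) x :=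
        (hasDerivAt_inv (hne x)).comp_hasFDerivAt x (hψd x).hasFDerivAt
      exact hinv.const_mul (-lam)
    have hv : HasFDerivAt (fun y => fderiv ℝ ψ y (Pi.single j 1))
        (fderiv ℝ (fun y => fderiv ℝ ψ y (Pi.single j 1)) x) x :=
      (((hg1 j).differentiable one_ne_zero) x).hasFDerivAt
    have hprod : HasFDerivAt (fun y => -lam * (ψ y)⁻¹ * fderiv ℝ ψ y (Pi.single j 1)) _ x :=
      hu.mul hv
    simp only [hhJ]
    rw [hFeq, hprod.fderiv]
    have e1 : fderiv ℝ (fun y => fderiv ℝ ψ y (Pi.single j 1)) x (Pi.single i 1) = hessψ i j := by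
      rw [hhψ]
    have e2 : fderiv ℝ ψ x (Pi.single j 1) = gradψ j := by rw [hgψ]
    have e3 : fderiv ℝ ψ x (Pi.single i 1) = gradψ i := by rw [hgψ]
    simp [e1, e2, e3, hc, hd]
    ring
  -- algebra
  set M := U * R⁻¹ * U.transpose with hM
  set v := gradψ
  have hq : gradJ ⬝ᵥ M.mulVec gradJ = c ^ 2 * (v ⬝ᵥ M.mulVec v) := by
    rw [hgJ']
    have : (fun i => c * v i) = c • v := rfl
    rw [this, smul_dotProduct, Matrix.mulVec_smul, dotProduct_smul, smul_eq_mul, smul_eq_mul]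
    ring
  have htr_vv : Matrix.trace (M * Matrix.vecMulVec v v) = v ⬝ᵥ M.mulVec v := by
    simp only [Matrix.trace, Matrix.diag, Matrix.mul_apply, Matrix.vecMulVec_apply,
      dotProduct, Matrix.mulVec, Finset.mul_sum]
    apply Finset.sum_congr rfl; intro i _
    apply Finset.sum_congr rfl; intro j _
    ring
  have hhJ'' : hessJ = c • hessψ + d • Matrix.vecMulVec v v := by
    rw [hhJ']
    funext i j
    simp only [Matrix.add_apply, Matrix.smul_apply, Matrix.vecMulVec_apply, smul_eq_mul]
    ring
  have htrJ : Matrix.trace (M * hessJ) = c * Matrix.trace (M * hessψ) + d * (v ⬝ᵥ M.mulVec v) := by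
    rw [hhJ'', Matrix.mul_add, Matrix.mul_smul, Matrix.mul_smul, Matrix.trace_add,
      Matrix.trace_smul, Matrix.trace_smul, htr_vv, smul_eq_mul, smul_eq_mul]
  rw [hBU, Matrix.smul_mul, Matrix.smul_mul, Matrix.trace_smul, Matrix.trace_smul,
    smul_eq_mul, smul_eq_mul, hq, htrJ, hc, hd]
  have hψne := hne x
  field_simp
  ring
end

section
/- Let λ > 0, B, U, R as above with B Bᵀ = λ U R⁻¹ Uᵀ, let a : ℝ^n × ℝ → ℝ^n and V : ℝ^n × ℝ → ℝ be continuous, and let ψ : ℝ^n × ℝ → ℝ be C^{2,1} and positive. Then J = -λ log ψ satisfies the HJB equation -∂ₜJ = -(1/2)(∂ₓJ)ᵀ U R⁻¹ Uᵀ ∂ₓJ + V + aᵀ ∂ₓJ + (1/2)Tr(B Bᵀ ∂ₓ²J) if and only if ψ satisfies the linear equation ∂ₜψ = -(-(V/λ) ψ + aᵀ ∂ₓψ + (1/2)Tr(B Bᵀ ∂ₓ²ψ)). -/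
open Matrix

/-- Equivalence of the nonlinear stochastic HJB equation for `J = -λ log ψ` with
the linear backward equation `∂ₜψ = -(-(V/λ)ψ + aᵀ∂ₓψ + (1/2)Tr(BBᵀ ∂ₓ²ψ))`,
under the compatibility condition `B Bᵀ = λ U R⁻¹ Uᵀ`. -/
theorem HJB_linearization {n m k : ℕ} (lam : ℝ) (hlam : 0 < lam)
    (B : Matrix (Fin n) (Fin k) ℝ) (U : Matrix (Fin n) (Fin m) ℝ)
    (R : Matrix (Fin m) (Fin m) ℝ) (hR : R.PosDef)
    (hBU : B * B.transpose = lam • (U * R⁻¹ * U.transpose))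
    (a : (Fin n → ℝ) → ℝ → (Fin n → ℝ)) (ha : Continuous (fun p : (Fin n → ℝ) × ℝ => a p.1 p.2))
    (V : (Fin n → ℝ) → ℝ → ℝ) (hV : Continuous (fun p : (Fin n → ℝ) × ℝ => V p.1 p.2))
    (ψ : (Fin n → ℝ) → ℝ → ℝ) (hψ : ContDiff ℝ 2 (fun p : (Fin n → ℝ) × ℝ => ψ p.1 p.2))
    (hpos : ∀ x t, 0 < ψ x t)
    (J : (Fin n → ℝ) → ℝ → ℝ) (hJ : J = fun x t => -lam * Real.log (ψ x t)) :
    (∀ (x : Fin n → ℝ) (t : ℝ),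
      -(deriv (fun s => J x s) t)
        = -(1/2) * ((fun i => fderiv ℝ (fun y => J y t) x (Pi.single i 1)) ⬝ᵥ
              (U * R⁻¹ * U.transpose).mulVec (fun i => fderiv ℝ (fun y => J y t) x (Pi.single i 1)))
          + V x t
          + (a x t ⬝ᵥ (fun i => fderiv ℝ (fun y => J y t) x (Pi.single i 1)))
          + (1/2) * Matrix.trace ((B * B.transpose) *
              Matrix.of (fun i j =>
                fderiv ℝ (fun y => fderiv ℝ (fun y' => J y' t) y (Pi.single j 1)) x (Pi.single i 1))))
    ↔ (∀ (x : Fin n → ℝ) (t : ℝ),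
      deriv (fun s => ψ x s) t
        = -( -(V x t / lam) * ψ x t
            + (a x t ⬝ᵥ (fun i => fderiv ℝ (fun y => ψ y t) x (Pi.single i 1)))
            + (1/2) * Matrix.trace ((B * B.transpose) *
                Matrix.of (fun i j =>
                  fderiv ℝ (fun y => fderiv ℝ (fun y' => ψ y' t) y (Pi.single j 1)) x (Pi.single i 1))))) := by
  subst hJ
  apply forall₂_congr
  intro x t
  -- notation
  have hg : ContDiff ℝ 2 (fun y : Fin n → ℝ => ψ y t) := hψ.comp (contDiff_id.prodMk contDiff_const)
  have hgt : ContDiff ℝ 2 (fun s => ψ x s) := hψ.comp (contDiff_const.prodMk contDiff_id)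
  have hDg : ∀ y, HasFDerivAt (fun y' => ψ y' t) (fderiv ℝ (fun y' => ψ y' t) y) y :=
    fun y => ((hg.differentiable two_ne_zero) y).hasFDerivAt
  set c : ℝ := ψ x t with hcdef
  have hc : c ≠ 0 := ne_of_gt (hpos x t)
  have h2 : lam ≠ 0 := ne_of_gt hlam
  set pv : Fin n → ℝ := fun i => fderiv ℝ (fun y => ψ y t) x (Pi.single i 1) with hpv
  set Hm : Matrix (Fin n) (Fin n) ℝ := Matrix.of (fun i j =>
      fderiv ℝ (fun y => fderiv ℝ (fun y' => ψ y' t) y (Pi.single j 1)) x (Pi.single i 1))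
    with hHm
  -- time derivative
  have E1 : deriv (fun s => -lam * Real.log (ψ x s)) t
      = -lam * (deriv (fun s => ψ x s) t / c) := by
    have hd : HasDerivAt (fun s => ψ x s) (deriv (fun s => ψ x s) t) t :=
      ((hgt.differentiable two_ne_zero) t).hasDerivAt
    exact ((hd.log (ne_of_gt (hpos x t))).const_mul (-lam)).deriv
  -- gradient
  have E2 : ∀ (y : Fin n → ℝ) (i : Fin n),
      fderiv ℝ (fun y' => -lam * Real.log (ψ y' t)) y (Pi.single i 1)
        = -lam * ((ψ y t)⁻¹ * fderiv ℝ (fun y' => ψ y' t) y (Pi.single i 1)) := by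
    intro y i
    rw [(((hDg y).log (ne_of_gt (hpos y t))).const_mul (-lam)).fderiv]
    simp [smul_eq_mul]
  have hvec : (fun i => fderiv ℝ (fun y => -lam * Real.log (ψ y t)) x (Pi.single i 1))
      = (-lam * c⁻¹) • pv := by
    funext i
    rw [E2 x i]
    simp [hpv, smul_eq_mul]
    ring
  -- Hessian
  have E3 : ∀ i j : Fin n,
      fderiv ℝ (fun y => fderiv ℝ (fun y' => -lam * Real.log (ψ y' t)) y (Pi.single j 1)) x
          (Pi.single i 1)
        = (-lam * pv j) * (-(c ^ 2)⁻¹ * pv i) + c⁻¹ * (-lam * Hm i j) := by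
    intro i j
    set q : (Fin n → ℝ) → ℝ := fun y => fderiv ℝ (fun y' => ψ y' t) y (Pi.single j 1) with hqdef
    have hqd : Differentiable ℝ q :=
      ((hg.fderiv_right (by norm_num : (1:WithTop ℕ∞)+1 ≤ 2)).differentiable one_ne_zero).clm_apply
        (differentiable_const _)
    have hfun : (fun y => fderiv ℝ (fun y' => -lam * Real.log (ψ y' t)) y (Pi.single j 1))
        = fun y => (-lam * q y) * (ψ y t)⁻¹ := by
      funext y
      rw [E2 y j]
      ring
    rw [hfun]
    have hinv : HasFDerivAt (fun y => (ψ y t)⁻¹)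
        ((-((ψ x t) ^ 2)⁻¹) • fderiv ℝ (fun y' => ψ y' t) x) x :=
      (hasDerivAt_inv (ne_of_gt (hpos x t))).comp_hasFDerivAt x (hDg x)
    have hq : HasFDerivAt q (fderiv ℝ q x) x := (hqd x).hasFDerivAt
    have hm' : HasFDerivAt (fun y => -lam * q y * (ψ y t)⁻¹)
        ((-lam * q x) • -(ψ x t ^ 2)⁻¹ • fderiv ℝ (fun y' => ψ y' t) x
          + (ψ x t)⁻¹ • -lam • fderiv ℝ q x) x := (hq.const_mul (-lam)).mul hinv
    rw [hm'.fderiv]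
    simp [smul_eq_mul, hqdef, hHm, hpv, hcdef]
  have hmat : Matrix.of (fun i j =>
        fderiv ℝ (fun y => fderiv ℝ (fun y' => -lam * Real.log (ψ y' t)) y (Pi.single j 1)) x
          (Pi.single i 1))
      = (lam * (c ^ 2)⁻¹) • vecMulVec pv pv + (-lam * c⁻¹) • Hm := by
    ext i j
    rw [Matrix.of_apply, E3 i j]
    simp [vecMulVec_apply, Matrix.smul_apply, smul_eq_mul]
    ring
  have htrA : ∀ A : Matrix (Fin n) (Fin n) ℝ,
      Matrix.trace (A * vecMulVec pv pv) = pv ⬝ᵥ A.mulVec pv := by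
    intro A
    simp only [Matrix.trace, Matrix.diag, Matrix.mul_apply, vecMulVec_apply, Matrix.mulVec,
      dotProduct, Finset.mul_sum]
    exact Finset.sum_congr rfl fun i _ => Finset.sum_congr rfl fun j _ => by ring
  set K : ℝ := pv ⬝ᵥ (U * R⁻¹ * U.transpose).mulVec pv with hK
  set D : ℝ := a x t ⬝ᵥ pv with hD
  set T : ℝ := Matrix.trace ((B * B.transpose) * Hm) with hT
  set ψt : ℝ := deriv (fun s => ψ x s) t with hψt
  have hS : pv ⬝ᵥ (B * B.transpose).mulVec pv = lam * K := by
    rw [hBU, smul_mulVec, dotProduct_smul, smul_eq_mul, hK]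
  have htr2 : Matrix.trace ((B * B.transpose) *
        ((lam * (c ^ 2)⁻¹) • vecMulVec pv pv + (-lam * c⁻¹) • Hm))
      = (lam * (c ^ 2)⁻¹) * (lam * K) + (-lam * c⁻¹) * T := by
    rw [Matrix.mul_add, Matrix.mul_smul, Matrix.mul_smul, trace_add, trace_smul, trace_smul,
      htrA, hS, smul_eq_mul, smul_eq_mul, hT]
  have hquad : ((-lam * c⁻¹) • pv) ⬝ᵥ (U * R⁻¹ * U.transpose).mulVec ((-lam * c⁻¹) • pv)
      = (-lam * c⁻¹) * ((-lam * c⁻¹) * K) := by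
    rw [smul_dotProduct, mulVec_smul, dotProduct_smul, smul_eq_mul, smul_eq_mul, hK]
  have hdot : a x t ⬝ᵥ ((-lam * c⁻¹) • pv) = (-lam * c⁻¹) * D := by
    rw [dotProduct_smul, smul_eq_mul, hD]
  rw [E1, hvec, hmat, hquad, hdot, htr2]
  constructor <;> intro h <;> field_simp at h ⊢
  · apply mul_left_cancel₀ (show (2*c^6 : ℝ) ≠ 0 by positivity)
    linear_combination (2*c^5) * h
  · apply mul_left_cancel₀ (show ((2*c^6)⁻¹ : ℝ) ≠ 0 by positivity)
    field_simp
    linear_combination c * h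
end
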